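/- For any real t, the determinant of the 4×4 matrix with columns (−B₁ + t·A₁, −B₂ + t·A₂, −B₃ + t·A₃, −B₄) equals −κ·((γ₁ + γt²)·u²v − 2uv²t + γ₁·H·κ + (γ + γ₁t²)·v³ − γ₁·v·(1 + t²)·E_c), where κ = u·t − v. (This is the evaluation of the coefficient C⁴₄ₓ in the characteristic analysis of the adjoint Euler equations.) -/

import Mathlib

open Matrix

set_option maxHeartbeats 2000000 in
/-- The determinant of the 4×4 matrix whose columns are
`(−B₁ + t A₁, −B₂ + t A₂, −B₃ + t A₃, −B₄)` (with `Aᵢ`, `Bᵢ` the columns of `Aᵀ`, `Bᵀ`)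
equals `−κ ((γ₁ + γt²)u²v − 2uv²t + γ₁Hκ + (γ + γ₁t²)v³ − γ₁v(1 + t²)E_c)`,
with `κ = u t − v`. -/
theorem adjoint_euler_coefficient_C44x
    (γ γ₁ u v H Ec : ℝ) (hγ : 1 < γ) (hγ₁ : γ₁ = γ - 1)
    (hEc : Ec = (u ^ 2 + v ^ 2) / 2)
    (AT BT : Matrix (Fin 4) (Fin 4) ℝ)
    (hAT : AT = !![0, γ₁ * Ec - u ^ 2, -(u * v), (γ₁ * Ec - H) * u;
                   1, (3 - γ) * u, v, H - γ₁ * u ^ 2;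
                   0, -(γ₁ * v), u, -(γ₁ * u * v);
                   0, γ₁, 0, γ * u])
    (hBT : BT = !![0, -(u * v), γ₁ * Ec - v ^ 2, (γ₁ * Ec - H) * v;
                   0, v, -(γ₁ * u), -(γ₁ * u * v);
                   1, u, (3 - γ) * v, H - γ₁ * v ^ 2;
                   0, 0, γ₁, γ * v]) :
    ∀ t κ : ℝ, κ = u * t - v →
      (Matrix.of fun i j : Fin 4 =>
          ![(fun r : Fin 4 => -(BT r 0) + t * AT r 0),
            (fun r : Fin 4 => -(BT r 1) + t * AT r 1),
            (fun r : Fin 4 => -(BT r 2) + t * AT r 2),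
            (fun r : Fin 4 => -(BT r 3))] j i).det
        = -κ * ((γ₁ + γ * t ^ 2) * u ^ 2 * v - 2 * u * v ^ 2 * t + γ₁ * H * κ
            + (γ + γ₁ * t ^ 2) * v ^ 3 - γ₁ * v * (1 + t ^ 2) * Ec) := by
  intro t κ hκ
  have hM : (Matrix.of fun i j : Fin 4 =>
          ![(fun r : Fin 4 => -(BT r 0) + t * AT r 0),
            (fun r : Fin 4 => -(BT r 1) + t * AT r 1),
            (fun r : Fin 4 => -(BT r 2) + t * AT r 2),
            (fun r : Fin 4 => -(BT r 3))] j i)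
      = !![-(BT 0 0) + t * AT 0 0, -(BT 0 1) + t * AT 0 1, -(BT 0 2) + t * AT 0 2, -(BT 0 3);
           -(BT 1 0) + t * AT 1 0, -(BT 1 1) + t * AT 1 1, -(BT 1 2) + t * AT 1 2, -(BT 1 3);
           -(BT 2 0) + t * AT 2 0, -(BT 2 1) + t * AT 2 1, -(BT 2 2) + t * AT 2 2, -(BT 2 3);
           -(BT 3 0) + t * AT 3 0, -(BT 3 1) + t * AT 3 1, -(BT 3 2) + t * AT 3 2, -(BT 3 3)] := by
    ext i j
    fin_cases i <;> fin_cases j <;> rfl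
  rw [hM]
  subst hAT hBT hκ hγ₁ hEc
  simp only [Matrix.cons_val', Matrix.cons_val_zero, Matrix.cons_val_one, Matrix.head_cons,
    Matrix.head_fin_const, Matrix.empty_val', Matrix.cons_val_fin_one, Matrix.head_fin_const,
    Matrix.cons_val_two, Matrix.cons_val_three, Matrix.tail_cons, Matrix.of_apply]
  simp +decide [Matrix.det_succ_row_zero, Fin.sum_univ_succ, Fin.succAbove, Fin.castSucc,
    Fin.castAdd, Fin.castLE]
  ring
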